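/- Let H be a real inner product space, let β > 0, and let F : H → H be β-cocoercive, i.e., ⟨F(z₁) − F(z₂), z₁ − z₂⟩ ≥ β‖F(z₁) − F(z₂)‖² for all z₁, z₂ ∈ H. Let z_⋆ ∈ H satisfy F(z_⋆) = 0, let α > 0, and let ζ : [0,∞) → H be differentiable with ζ'(t) = −α F(ζ(t)) for all t ≥ 0. Then the function t ↦ ‖F(ζ(t))‖ is nonincreasing, and for every t > 0, ‖F(ζ(t))‖² ≤ ‖ζ(0) − z_⋆‖² / (2αβt). -/

import Mathlib

open scoped RealInnerProductSpace
open Filter Topology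

private lemma hasDerivAt_norm_sq {H : Type*} [NormedAddCommGroup H]
    [InnerProductSpace ℝ H] {f : ℝ → H} {f' : H} {x : ℝ} (hf : HasDerivAt f f' x) :
    HasDerivAt (fun u => ‖f u‖ ^ 2) (2 * ⟪f', f x⟫) x := by
  have h := hf.inner ℝ hf
  have heq : (fun u => ‖f u‖ ^ 2) = fun u => (inner ℝ (f u) (f u) : ℝ) := by
    funext u; rw [real_inner_self_eq_norm_sq]
  rw [heq]
  refine h.congr_deriv ?_
  rw [real_inner_comm (f x) f']; ring

/-- Antitone on `Ici 0` from pointwise `HasDerivAt` with nonpositive derivative. -/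
private lemma antitoneOn_aux {f : ℝ → ℝ} {f' : ℝ → ℝ}
    (hf : ∀ x ∈ Set.Ici (0 : ℝ), HasDerivAt f (f' x) x)
    (hf' : ∀ x ∈ Set.Ici (0 : ℝ), f' x ≤ 0) : AntitoneOn f (Set.Ici 0) := by
  apply antitoneOn_of_deriv_nonpos (convex_Ici 0)
  · intro x hx; exact (hf x hx).continuousAt.continuousWithinAt
  · intro x hx
    rw [interior_Ici] at hx
    exact ((hf x (Set.mem_Ici.mpr (le_of_lt (Set.mem_Ioi.mp hx)))).differentiableAt).differentiableWithinAt
  · intro x hx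
    rw [interior_Ici] at hx
    rw [(hf x (Set.mem_Ici.mpr (le_of_lt (Set.mem_Ioi.mp hx)))).deriv]
    exact hf' x (Set.mem_Ici.mpr (le_of_lt (Set.mem_Ioi.mp hx)))

/-- For a `β`-cocoercive map `F` with `F z⋆ = 0` and the flow `ζ' = −α F(ζ)`,
the function `t ↦ ‖F(ζ(t))‖` is nonincreasing and
`‖F(ζ(t))‖² ≤ ‖ζ(0) − z⋆‖²/(2αβt)` for all `t > 0`. -/
theorem stmt_17 {H : Type*} [NormedAddCommGroup H] [InnerProductSpace ℝ H]
    (F : H → H) (α β : ℝ) (hα : 0 < α) (hβ : 0 < β)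
    (hcoco : ∀ z₁ z₂ : H, β * ‖F z₁ - F z₂‖ ^ 2 ≤ ⟪F z₁ - F z₂, z₁ - z₂⟫)
    (zstar : H) (hzstar : F zstar = 0)
    (ζ : ℝ → H) (hζ : ∀ t : ℝ, 0 ≤ t → HasDerivAt ζ (-α • F (ζ t)) t) :
    (∀ s t : ℝ, 0 ≤ s → s ≤ t → ‖F (ζ t)‖ ≤ ‖F (ζ s)‖) ∧
    (∀ t : ℝ, 0 < t → ‖F (ζ t)‖ ^ 2 ≤ ‖ζ 0 - zstar‖ ^ 2 / (2 * α * β * t)) := by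
  have part1 : ∀ s t : ℝ, 0 ≤ s → s ≤ t → ‖F (ζ t)‖ ≤ ‖F (ζ s)‖ := by
    intro s t hs hst
    -- For every δ > 0, u ↦ ‖ζ(u+δ) − ζ(u)‖² is antitone on [0,∞).
    have key : ∀ δ : ℝ, 0 < δ → ‖ζ (t + δ) - ζ t‖ ≤ ‖ζ (s + δ) - ζ s‖ := by
      intro δ hδ
      have hanti : AntitoneOn (fun u => ‖ζ (u + δ) - ζ u‖ ^ 2) (Set.Ici 0) := by
        apply antitoneOn_aux
          (f' := fun u => 2 * ⟪(-α • F (ζ (u + δ))) - (-α • F (ζ u)), ζ (u + δ) - ζ u⟫)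
        · intro u hu
          have h1 : HasDerivAt (fun x => ζ (x + δ)) (-α • F (ζ (u + δ))) u :=
            HasDerivAt.comp_add_const u δ (hζ (u + δ) (by have := Set.mem_Ici.mp hu; linarith))
          exact hasDerivAt_norm_sq (h1.sub (hζ u hu))
        · intro u hu
          have h2 : (-α • F (ζ (u + δ))) - (-α • F (ζ u))
              = (-α) • (F (ζ (u + δ)) - F (ζ u)) := by
            rw [smul_sub]
          rw [h2, inner_smul_left]
          have h3 : (0 : ℝ) ≤ ⟪F (ζ (u + δ)) - F (ζ u), ζ (u + δ) - ζ u⟫ :=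
            le_trans (by positivity) (hcoco (ζ (u + δ)) (ζ u))
          have : (starRingEnd ℝ) (-α) = -α := rfl
          rw [this]
          nlinarith
      have h := hanti hs (le_trans hs hst) hst
      exact (pow_le_pow_iff_left₀ (norm_nonneg _) (norm_nonneg _) two_ne_zero).1 h
    -- pass to the limit δ → 0⁺
    have hlim : ∀ r : ℝ, 0 ≤ r →
        Tendsto (fun δ : ℝ => ‖δ⁻¹ • (ζ (r + δ) - ζ r)‖) (𝓝[>] 0)
          (𝓝 (α * ‖F (ζ r)‖)) := by
      intro r hr
      have h := (hζ r hr).tendsto_slope_zero_right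
      have := h.norm
      have heq : ‖-α • F (ζ r)‖ = α * ‖F (ζ r)‖ := by
        rw [norm_smul, Real.norm_eq_abs, abs_neg, abs_of_pos hα]
      rwa [heq] at this
    have hineq : ∀ᶠ δ in 𝓝[>] (0 : ℝ),
        ‖δ⁻¹ • (ζ (t + δ) - ζ t)‖ ≤ ‖δ⁻¹ • (ζ (s + δ) - ζ s)‖ := by
      filter_upwards [self_mem_nhdsWithin] with δ hδ
      rw [norm_smul, norm_smul]
      have : (0 : ℝ) ≤ ‖(δ : ℝ)⁻¹‖ := norm_nonneg _
      exact mul_le_mul_of_nonneg_left (key δ hδ) this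
    have hfin : α * ‖F (ζ t)‖ ≤ α * ‖F (ζ s)‖ :=
      le_of_tendsto_of_tendsto (hlim t (le_trans hs hst)) (hlim s hs) hineq
    exact le_of_mul_le_mul_left hfin hα
  refine ⟨part1, ?_⟩
  intro t ht
  set c : ℝ := 2 * α * β * ‖F (ζ t)‖ ^ 2 with hc
  have hanti : AntitoneOn (fun u => ‖ζ u - zstar‖ ^ 2 + c * u) (Set.Icc 0 t) := by
    apply antitoneOn_of_deriv_nonpos (convex_Icc 0 t)
    · intro u hu
      have h1 : HasDerivAt (fun u => ζ u - zstar) (-α • F (ζ u)) u := (hζ u hu.1).sub_const zstar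
      exact (((hasDerivAt_norm_sq h1).add
        ((hasDerivAt_id u).const_mul c)).continuousAt).continuousWithinAt
    · intro u hu
      rw [interior_Icc] at hu
      have h1 : HasDerivAt (fun u => ζ u - zstar) (-α • F (ζ u)) u :=
        (hζ u hu.1.le).sub_const zstar
      exact (((hasDerivAt_norm_sq h1).add
        ((hasDerivAt_id u).const_mul c)).differentiableAt).differentiableWithinAt
    · intro u hu
      rw [interior_Icc] at hu
      have h1 : HasDerivAt (fun u => ζ u - zstar) (-α • F (ζ u)) u :=
        (hζ u hu.1.le).sub_const zstar
      have hd := (hasDerivAt_norm_sq h1).add ((hasDerivAt_id u).const_mul c)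
      simp only [id_eq] at hd
      rw [show (fun u => ‖ζ u - zstar‖ ^ 2 + c * u) = ((fun u => ‖ζ u - zstar‖ ^ 2) + fun y => c * y) from rfl, hd.deriv]
      have hco := hcoco (ζ u) zstar
      rw [hzstar, sub_zero] at hco
      have hmono : ‖F (ζ t)‖ ≤ ‖F (ζ u)‖ := part1 u t hu.1.le hu.2.le
      have : ⟪-α • F (ζ u), ζ u - zstar⟫ ≤ -α * (β * ‖F (ζ u)‖ ^ 2) := by
        rw [inner_smul_left]
        have : (starRingEnd ℝ) (-α) = -α := rfl
        rw [this]
        nlinarith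
      have h4 : β * ‖F (ζ t)‖ ^ 2 ≤ β * ‖F (ζ u)‖ ^ 2 := by
        have hsq := pow_le_pow_left₀ (norm_nonneg (F (ζ t))) hmono 2
        nlinarith
      rw [hc]
      nlinarith
  have h0t : (0 : ℝ) ∈ Set.Icc (0:ℝ) t := ⟨le_refl 0, ht.le⟩
  have htt : t ∈ Set.Icc (0:ℝ) t := ⟨ht.le, le_refl t⟩
  have := hanti h0t htt ht.le
  simp only [mul_zero, add_zero, mul_comm] at this
  have hV : (0 : ℝ) ≤ ‖ζ t - zstar‖ ^ 2 := by positivity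
  have hct : c * t ≤ ‖ζ 0 - zstar‖ ^ 2 := by nlinarith
  rw [hc] at hct
  rw [le_div_iff₀ (by positivity)]
  nlinarith
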